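/- Suppose r(s,a) ≥ 0 for all (s,a), and let q₂* be the unique solution of q = r + γ₂·P₂ Ω(q). Then (i) q₂*(s,a) ≥ 0 for all (s,a); (ii) every q₂ : S × A → ℝ satisfying the relaxed inequality r + γ₂·P₂ Ω(q₂) ≤ q₂ pointwise satisfies q₂ ≥ q₂* pointwise, and hence ‖q₂‖_{ρ₂} ≥ ‖q₂*‖_{ρ₂} for any probability weight ρ₂ on S × A; (iii) if ρ₂ has full support, then any q₂ feasible for the relaxed inequality with ‖q₂‖_{ρ₂} = ‖q₂*‖_{ρ₂} equals q₂*, so the relaxed constraint is tight at every minimum-ρ₂-norm feasible solution. -/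

import Mathlib

open BigOperators

/-- Tightness claim of Theorem 1: if the reward is nonnegative, the fixed point
`q₂*` of the target soft Bellman equation is nonnegative, every relaxed-feasible
`q₂` dominates it pointwise (hence in `ρ₂`-norm), and under full support any
relaxed-feasible solution of minimal `ρ₂`-norm equals `q₂*`. -/
theorem stmt_3 {S A : Type*} [Fintype S] [Fintype A] [Nonempty S] [Nonempty A]
    (τ₂ : ℝ) (hτ₂ : 0 < τ₂)
    (πref : S → A → ℝ) (hπ0 : ∀ s a, 0 < πref s a) (hπ1 : ∀ s, ∑ a, πref s a = 1)
    (P₂ : S → A → S → ℝ) (hP0 : ∀ s a s', 0 ≤ P₂ s a s') (hP1 : ∀ s a, ∑ s', P₂ s a s' = 1)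
    (γ₂ : ℝ) (hγ0 : 0 ≤ γ₂) (hγ1 : γ₂ < 1)
    (r : S × A → ℝ) (hr : ∀ x, 0 ≤ r x)
    (Ω : (S × A → ℝ) → S → ℝ)
    (hΩ : ∀ q s, Ω q s = τ₂ * Real.log (∑ a, πref s a * Real.exp (q (s, a) / τ₂)))
    (q₂s : S × A → ℝ)
    (hfix : ∀ x : S × A, q₂s x = r x + γ₂ * ∑ s', P₂ x.1 x.2 s' * Ω q₂s s') :
    (∀ x, 0 ≤ q₂s x) ∧
    (∀ q₂ : S × A → ℝ,
        (∀ x : S × A, r x + γ₂ * ∑ s', P₂ x.1 x.2 s' * Ω q₂ s' ≤ q₂ x) →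
        (∀ x, q₂s x ≤ q₂ x) ∧
          ∀ ρ₂ : S × A → ℝ, (∀ x, 0 ≤ ρ₂ x) → (∑ x, ρ₂ x = 1) →
            Real.sqrt (∑ x, ρ₂ x * q₂s x ^ 2) ≤ Real.sqrt (∑ x, ρ₂ x * q₂ x ^ 2)) ∧
    (∀ ρ₂ : S × A → ℝ, (∀ x, 0 < ρ₂ x) → (∑ x, ρ₂ x = 1) →
        ∀ q₂ : S × A → ℝ,
          (∀ x : S × A, r x + γ₂ * ∑ s', P₂ x.1 x.2 s' * Ω q₂ s' ≤ q₂ x) →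
          Real.sqrt (∑ x, ρ₂ x * q₂ x ^ 2) = Real.sqrt (∑ x, ρ₂ x * q₂s x ^ 2) →
          q₂ = q₂s) := by
  -- shift-monotonicity of Ω
  have key : ∀ (q q' : S × A → ℝ) (m : ℝ), (∀ x, q' x + m ≤ q x) →
      ∀ s, Ω q' s + m ≤ Ω q s := by
    intro q q' m h s
    rw [hΩ, hΩ]
    have hpos : 0 < ∑ a, πref s a * Real.exp (q' (s, a) / τ₂) :=
      Finset.sum_pos (fun a _ => mul_pos (hπ0 s a) (Real.exp_pos _)) Finset.univ_nonempty
    have hle : Real.exp (m / τ₂) * ∑ a, πref s a * Real.exp (q' (s, a) / τ₂)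
        ≤ ∑ a, πref s a * Real.exp (q (s, a) / τ₂) := by
      rw [Finset.mul_sum]
      refine Finset.sum_le_sum fun a _ => ?_
      have h1 : Real.exp (m / τ₂) * (πref s a * Real.exp (q' (s, a) / τ₂))
          = πref s a * Real.exp ((q' (s, a) + m) / τ₂) := by
        rw [add_div, Real.exp_add]; ring
      rw [h1]
      exact mul_le_mul_of_nonneg_left
        (Real.exp_le_exp.2 (div_le_div_of_nonneg_right (h (s, a)) hτ₂.le)) (hπ0 s a).le
    have hlog := Real.log_le_log (mul_pos (Real.exp_pos _) hpos) hle
    rw [Real.log_mul (Real.exp_ne_zero _) (ne_of_gt hpos), Real.log_exp] at hlog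
    have := mul_le_mul_of_nonneg_left hlog hτ₂.le
    have hτne : τ₂ ≠ 0 := ne_of_gt hτ₂
    rw [mul_add, mul_div_cancel₀ _ hτne] at this
    linarith
  -- Ω of zero is zero
  have hzero : ∀ s, Ω (fun _ => 0) s = 0 := by
    intro s
    rw [hΩ]
    simp [hπ1 s]
  -- (i) nonnegativity of the fixed point
  have hq0 : ∀ x, 0 ≤ q₂s x := by
    obtain ⟨x₀, -, hx₀⟩ := Finset.exists_min_image Finset.univ q₂s
      ⟨Classical.arbitrary _, Finset.mem_univ _⟩
    have hΩm : ∀ s, q₂s x₀ ≤ Ω q₂s s := by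
      intro s
      have := key q₂s (fun _ => 0) (q₂s x₀)
        (fun x => by simpa using hx₀ x (Finset.mem_univ x)) s
      simpa [hzero s] using this
    have hsum : q₂s x₀ ≤ ∑ s', P₂ x₀.1 x₀.2 s' * Ω q₂s s' := by
      calc q₂s x₀ = ∑ s', P₂ x₀.1 x₀.2 s' * q₂s x₀ := by
            rw [← Finset.sum_mul, hP1, one_mul]
        _ ≤ _ := Finset.sum_le_sum fun s' _ =>
            mul_le_mul_of_nonneg_left (hΩm s') (hP0 _ _ s')
    have h := hfix x₀
    have h2 := mul_le_mul_of_nonneg_left hsum hγ0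
    have hm : 0 ≤ q₂s x₀ := by nlinarith [hr x₀]
    intro x
    exact hm.trans (hx₀ x (Finset.mem_univ x))
  -- (ii) pointwise domination
  have hdom : ∀ q₂ : S × A → ℝ,
      (∀ x : S × A, r x + γ₂ * ∑ s', P₂ x.1 x.2 s' * Ω q₂ s' ≤ q₂ x) →
      ∀ x, q₂s x ≤ q₂ x := by
    intro q₂ hq
    obtain ⟨x₀, -, hx₀⟩ := Finset.exists_min_image Finset.univ (fun x => q₂ x - q₂s x)
      ⟨Classical.arbitrary _, Finset.mem_univ _⟩
    set m := q₂ x₀ - q₂s x₀ with hm_def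
    have hΩm : ∀ s, Ω q₂s s + m ≤ Ω q₂ s :=
      key q₂ q₂s m (fun x => by have := hx₀ x (Finset.mem_univ x); linarith)
    have hsum : (∑ s', P₂ x₀.1 x₀.2 s' * Ω q₂s s') + m ≤ ∑ s', P₂ x₀.1 x₀.2 s' * Ω q₂ s' := by
      have : (∑ s', P₂ x₀.1 x₀.2 s' * Ω q₂s s') + m
          = ∑ s', P₂ x₀.1 x₀.2 s' * (Ω q₂s s' + m) := by
        simp [mul_add, Finset.sum_add_distrib, ← Finset.sum_mul, hP1]
      rw [this]
      exact Finset.sum_le_sum fun s' _ =>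
        mul_le_mul_of_nonneg_left (hΩm s') (hP0 _ _ s')
    have h1 := hq x₀
    have h2 := hfix x₀
    have h3 := mul_le_mul_of_nonneg_left hsum hγ0
    have hm0 : 0 ≤ m := by nlinarith
    intro x
    have := hx₀ x (Finset.mem_univ x)
    linarith
  refine ⟨hq0, ?_, ?_⟩
  · intro q₂ hq
    refine ⟨hdom q₂ hq, ?_⟩
    intro ρ₂ hρ0 _
    apply Real.sqrt_le_sqrt
    refine Finset.sum_le_sum fun x _ => ?_
    exact mul_le_mul_of_nonneg_left
      (pow_le_pow_left₀ (hq0 x) (hdom q₂ hq x) 2) (hρ0 x)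
  · intro ρ₂ hρ0 hρ1 q₂ hq heq
    have hle : ∀ x, q₂s x ≤ q₂ x := hdom q₂ hq
    have h1 : ∀ x ∈ Finset.univ, ρ₂ x * q₂s x ^ 2 ≤ ρ₂ x * q₂ x ^ 2 := fun x _ =>
      mul_le_mul_of_nonneg_left (pow_le_pow_left₀ (hq0 x) (hle x) 2) (hρ0 x).le
    have hnn : 0 ≤ ∑ x, ρ₂ x * q₂s x ^ 2 :=
      Finset.sum_nonneg fun x _ => mul_nonneg (hρ0 x).le (sq_nonneg _)
    have hnn' : 0 ≤ ∑ x, ρ₂ x * q₂ x ^ 2 :=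
      Finset.sum_nonneg fun x _ => mul_nonneg (hρ0 x).le (sq_nonneg _)
    have hsumeq : ∑ x, ρ₂ x * q₂ x ^ 2 = ∑ x, ρ₂ x * q₂s x ^ 2 := by
      have := congrArg (fun t => t ^ 2) heq
      simpa [Real.sq_sqrt hnn, Real.sq_sqrt hnn'] using this
    have := (Finset.sum_eq_sum_iff_of_le h1).1 hsumeq.symm
    funext x
    have hx := this x (Finset.mem_univ x)
    have hsq : q₂s x ^ 2 = q₂ x ^ 2 :=
      mul_left_cancel₀ (ne_of_gt (hρ0 x)) hx
    nlinarith [hq0 x, hle x]
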